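/- arXiv:0801.1066 — 2 statements merged into one kernel-verified Lean document; each statement's English description precedes it below -/
import Mathlib

section
/- If for some N and K the Gilbreath differences satisfy d₁(1) = ⋯ = d_K(1) = 1 and d_K(n) ∈ {0, 2} for all 2 ≤ n ≤ N, then d_k(1) = 1 for all K ≤ k ≤ N + K − 1. -/
theorem gilbreath_propagation (d : ℕ → ℕ → ℕ)
    (hrec : ∀ k n, d (k + 1) n = Nat.dist (d k n) (d k (n + 1)))
    (N K : ℕ) (hK : 1 ≤ K)
    (h1 : ∀ k, 1 ≤ k → k ≤ K → d k 1 = 1)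
    (h02 : ∀ n, 2 ≤ n → n ≤ N → d K n = 0 ∨ d K n = 2) :
    ∀ k, K ≤ k → k ≤ N + K - 1 → d k 1 = 1 := by
  have key : ∀ j, j + 1 ≤ N →
      d (K + j) 1 = 1 ∧ ∀ n, 2 ≤ n → n + j ≤ N → d (K + j) n = 0 ∨ d (K + j) n = 2 := by
    intro j
    induction j with
    | zero =>
      intro _
      exact ⟨h1 K hK le_rfl, fun n hn hn' => h02 n hn (by omega)⟩
    | succ j ih =>
      intro hj
      obtain ⟨ha, hb⟩ := ih (by omega)
      have h2 : d (K + j) 2 = 0 ∨ d (K + j) 2 = 2 := hb 2 le_rfl (by omega)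
      constructor
      · have := hrec (K + j) 1
        rw [show K + (j + 1) = K + j + 1 by ring, this, ha]
        rcases h2 with h | h <;> simp [h, Nat.dist]
      · intro n hn hn'
        have e1 := hb n hn (by omega)
        have e2 := hb (n + 1) (by omega) (by omega)
        have := hrec (K + j) n
        rw [show K + (j + 1) = K + j + 1 by ring, this]
        rcases e1 with h | h <;> rcases e2 with h' | h' <;> simp [h, h', Nat.dist]
  intro k hk hk'
  rcases Nat.eq_or_lt_of_le hk with h | h
  · exact h ▸ h1 K hK le_rfl
  · have hN : k - K + 1 ≤ N := by omega
    have := (key (k - K) hN).1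
    rwa [show K + (k - K) = k by omega] at this
end

section
/- Chebyshev's bound: ϑ(x) = O(x), i.e. there is a constant C such that ∑_{p ≤ x, p prime} log p ≤ C·x for all x ≥ 1. -/
theorem chebyshev_theta_bigO :
    ∃ C : ℝ, ∀ x : ℝ, 1 ≤ x →
      ∑ p ∈ (Finset.Iic ⌊x⌋₊).filter Nat.Prime, Real.log p ≤ C * x := by
  refine ⟨Real.log 4, fun x hx => ?_⟩
  have hx0 : (0:ℝ) ≤ x := le_trans zero_le_one hx
  have hIic : Finset.Iic ⌊x⌋₊ = Finset.range (⌊x⌋₊ + 1) := by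
    ext m; simp [Nat.lt_succ_iff]
  have h1 : ∑ p ∈ (Finset.Iic ⌊x⌋₊).filter Nat.Prime, Real.log p
      = Real.log (primorial ⌊x⌋₊) := by
    rw [hIic, primorial, Nat.cast_prod, Real.log_prod]
    intro p hp
    simp only [Finset.mem_filter] at hp
    exact_mod_cast hp.2.pos.ne'
  rw [h1]
  calc Real.log (primorial ⌊x⌋₊) ≤ Real.log ((4:ℕ) ^ ⌊x⌋₊) := by
        apply Real.log_le_log (by exact_mod_cast primorial_pos _)
        exact_mod_cast primorial_le_4_pow _
    _ = ⌊x⌋₊ * Real.log 4 := by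
        push_cast
        rw [Real.log_pow]
    _ ≤ x * Real.log 4 := by
        apply mul_le_mul_of_nonneg_right (Nat.floor_le hx0)
        exact Real.log_nonneg (by norm_num)
    _ = Real.log 4 * x := mul_comm _ _
end
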